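/- Let π: G → Γ be a surjection of finite groups with Γ abelian and H = ker(π) an abelian p-group, so that the conjugation action of G on H factors through Γ, giving H the structure of a Γ-module. For γ ∈ Γ of order n, let d_γ(G, π) be the number of conjugacy classes of elements g ∈ G with π(g) = γ and ord(g) = n. Then d_γ(G, π) is at most the number of Γ-orbits on the quotient group A_γ^-(H)/B_γ^-(H), where A_γ^-(H) = {h ∈ H : ∑_{i=0}^{n-1} γ^i(h) = 0} and B_γ^-(H) = {x − γ(x) : x ∈ H}. -/

import Mathlib

open MulAction in
lemma stmt13_count {K X : Type*} [Group K] [Fintype K] [Finite X] (M : MulAction K X) :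
    Nat.card (Quot fun x y : X => ∃ k : K, M.toSMul.smul k x = y) * Nat.card K
      = ∑ k : K, Nat.card {x : X // M.toSMul.smul k x = x} := by
  letI := M
  letI : Fintype X := Fintype.ofFinite X
  classical
  have e : (Quot fun x y : X => ∃ k : K, M.toSMul.smul k x = y) ≃ orbitRel.Quotient K X := by
    refine Quot.congr (Equiv.refl X) (fun x y => ?_)
    show (∃ k : K, k • x = y) ↔ (orbitRel K X).r x y
    rw [orbitRel_apply]
    constructor
    · rintro ⟨k, rfl⟩; exact ⟨k⁻¹, by simp⟩
    · rintro ⟨k, rfl⟩; exact ⟨k⁻¹, by simp⟩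
  rw [Nat.card_congr e]
  have hb := MulAction.sum_card_fixedBy_eq_card_orbits_mul_card_group K X
  simp only [Nat.card_eq_fintype_card]
  rw [← hb]
  exact Finset.sum_congr rfl fun k _ => rfl

lemma stmt13_orbit_le {K X : Type*} [Group K] [Finite K] [Finite X]
    (M N : MulAction K X)
    (hfix : ∀ k : K, Nat.card {x : X // M.toSMul.smul k x = x}
      ≤ Nat.card {x : X // N.toSMul.smul k x = x}) :
    Nat.card (Quot fun x y : X => ∃ k : K, M.toSMul.smul k x = y)
      ≤ Nat.card (Quot fun x y : X => ∃ k : K, N.toSMul.smul k x = y) := by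
  letI : Fintype K := Fintype.ofFinite K
  have h1 := stmt13_count M
  have h2 := stmt13_count N
  have hK : 0 < Nat.card K := Nat.card_pos
  refine Nat.le_of_mul_le_mul_right ?_ hK
  rw [h1, h2]
  exact Finset.sum_le_sum fun k _ => hfix k

set_option maxHeartbeats 2000000 in
theorem stmt_13 (p : ℕ) (hp : p.Prime) (G Γ : Type*) [Group G] [Finite G] [CommGroup Γ]
    (π : G →* Γ) (hπ : Function.Surjective π)
    (hcomm : ∀ a b : π.ker, a * b = b * a)
    (hpgroup : ∀ h : π.ker, ∃ k : ℕ, h ^ p ^ k = 1)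
    (φ : Γ →* MulAut ↥π.ker)
    (hφ : ∀ g : G, ∀ h : π.ker, ((φ (π g) h : π.ker) : G) = g * (h : G) * g⁻¹)
    (γ : Γ) (n : ℕ) (hn : orderOf γ = n) :
    Nat.card (Quot (fun a b : {g : G // π g = γ ∧ orderOf g = n} => IsConj a.1 b.1)) ≤
      Nat.card (Quot (fun a b :
          {h : ↥π.ker // ((List.range n).map fun i => φ (γ ^ i) h).prod = 1} =>
        ∃ σ : Γ, ∃ x : ↥π.ker, b.1 = φ σ a.1 * (x * (φ γ x)⁻¹))) := by
  classical
  letI : CommGroup ↥π.ker := { (inferInstance : Group ↥π.ker) with mul_comm := hcomm }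
  have hΓ : Finite Γ := Finite.of_surjective π hπ
  by_cases hne : Nonempty {g : G // π g = γ ∧ orderOf g = n}
  swap
  · have : IsEmpty (Quot (fun a b : {g : G // π g = γ ∧ orderOf g = n} => IsConj a.1 b.1)) :=
      ⟨fun q => @Quot.ind _ _ (fun _ => False) (fun a => hne ⟨a⟩) q⟩
    rw [Nat.card_of_isEmpty]
    exact Nat.zero_le _
  obtain ⟨⟨g₀, hg₀γ, hg₀n⟩⟩ := hne
  have hg₀pow : g₀ ^ n = 1 := by rw [← hg₀n]; exact pow_orderOf_eq_one g₀
  have hγpow : γ ^ n = 1 := by rw [← hn]; exact pow_orderOf_eq_one γ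
  -- conjugation formulas
  have hpow : ∀ (i : ℕ) (h : ↥π.ker), ((φ (γ ^ i) h : ↥π.ker) : G) = g₀ ^ i * h * (g₀ ^ i)⁻¹ := by
    intro i h
    have hπi : π (g₀ ^ i) = γ ^ i := by rw [map_pow, hg₀γ]
    rw [← hπi]; exact hφ _ h
  have φcomm : ∀ (σ δ : Γ) (x : ↥π.ker), φ σ (φ δ x) = φ δ (φ σ x) := by
    intro σ δ x
    have h1 : φ σ (φ δ x) = φ (σ * δ) x := by rw [map_mul]; rfl
    have h2 : φ δ (φ σ x) = φ (δ * σ) x := by rw [map_mul]; rfl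
    rw [h1, h2, mul_comm]
  -- the key power formula
  have L1 : ∀ (m : ℕ) (h : ↥π.ker),
      ((h : G) * g₀) ^ m = ((((List.range m).map fun i => φ (γ ^ i) h).prod : ↥π.ker) : G) * g₀ ^ m := by
    intro m h
    induction m with
    | zero => simp
    | succ m ih =>
      rw [pow_succ, ih, List.range_succ, List.map_append, List.prod_append]
      simp only [List.map_cons, List.map_nil, List.prod_cons, List.prod_nil, mul_one,
        Subgroup.coe_mul]
      rw [hpow m h]
      group
  have memA_iff : ∀ h : ↥π.ker,
      ((((List.range n).map fun i => φ (γ ^ i) h).prod : ↥π.ker) = 1)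
        ↔ ((h : G) * g₀) ^ n = 1 := by
    intro h
    rw [L1 n h, hg₀pow, mul_one]
    constructor
    · intro hh; rw [hh]; exact OneMemClass.coe_one _
    · intro hh; exact_mod_cast hh
  have ord_iff : ∀ g : G, π g = γ → (orderOf g = n ↔ g ^ n = 1) := by
    intro g hg
    constructor
    · intro h; rw [← h]; exact pow_orderOf_eq_one g
    · intro h
      exact Nat.dvd_antisymm (orderOf_dvd_of_pow_eq_one h)
        (by rw [← hn, ← hg]; exact orderOf_map_dvd π g)
  -- subgroups
  set τ : ↥π.ker →* ↥π.ker := MonoidHom.mk' (fun x => x * (φ γ x)⁻¹) (by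
    intro a b
    show a * b * (φ γ (a * b))⁻¹ = a * (φ γ a)⁻¹ * (b * (φ γ b)⁻¹)
    rw [map_mul, mul_inv]
    exact mul_mul_mul_comm _ _ _ _) with hτ
  set ν : ↥π.ker →* ↥π.ker :=
    MonoidHom.mk' (fun h => ((List.range n).map fun i => φ (γ ^ i) h).prod) (by
      intro a b
      have key : ∀ m : ℕ, ((List.range m).map fun i => φ (γ ^ i) (a * b)).prod
          = ((List.range m).map fun i => φ (γ ^ i) a).prod
            * ((List.range m).map fun i => φ (γ ^ i) b).prod := by
        intro m
        induction m with
        | zero => simp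
        | succ m ih =>
          rw [List.range_succ]
          simp only [List.map_append, List.prod_append, List.map_cons, List.map_nil,
            List.prod_cons, List.prod_nil, mul_one]
          rw [ih, map_mul]
          exact mul_mul_mul_comm _ _ _ _
      exact key n) with hν
  set B : Subgroup ↥π.ker := τ.range with hB
  set A : Subgroup ↥π.ker := ν.ker with hA
  have νφ : ∀ (σ : Γ) (x : ↥π.ker), ν (φ σ x) = φ σ (ν x) := by
    intro σ x
    show ((List.range n).map fun i => φ (γ ^ i) (φ σ x)).prod
      = φ σ ((List.range n).map fun i => φ (γ ^ i) x).prod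
    have hmap : ∀ l : List ↥π.ker, φ σ l.prod = (l.map (φ σ)).prod := by
      intro l
      induction l with
      | nil => simp
      | cons a t iht => simp [map_mul, iht]
    rw [hmap, List.map_map]
    have hfun : (⇑(φ σ) ∘ fun i => φ (γ ^ i) x) = fun i => φ (γ ^ i) (φ σ x) :=
      funext fun i => φcomm σ (γ ^ i) x
    rw [hfun]
  have τφ : ∀ (σ : Γ) (x : ↥π.ker), τ (φ σ x) = φ σ (τ x) := by
    intro σ x
    show φ σ x * (φ γ (φ σ x))⁻¹ = φ σ (x * (φ γ x)⁻¹)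
    rw [map_mul, map_inv, φcomm γ σ]
  have hBA : B ≤ A := by
    rintro _ ⟨x, rfl⟩
    show ν (τ x) = 1
    have key : ∀ m : ℕ, ((List.range m).map fun i => φ (γ ^ i) (τ x)).prod
        = x * (φ (γ ^ m) x)⁻¹ := by
      intro m
      induction m with
      | zero => simp
      | succ m ih =>
        rw [List.range_succ]
        simp only [List.map_append, List.prod_append, List.map_cons, List.map_nil,
          List.prod_cons, List.prod_nil, mul_one, ih]
        have hτm : φ (γ ^ m) (τ x) = φ (γ ^ m) x * (φ (γ ^ (m + 1)) x)⁻¹ := by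
          show φ (γ ^ m) (x * (φ γ x)⁻¹) = _
          rw [map_mul, map_inv]
          congr 2
          rw [pow_succ]
          rw [map_mul]
          rfl
        rw [hτm, ← mul_assoc, inv_mul_cancel_right]
    show ((List.range n).map fun i => φ (γ ^ i) (τ x)).prod = 1
    rw [key n, hγpow, map_one]
    simp
  -- A-stability and B-stability under the action
  have hAφ : ∀ (σ : Γ) (h : ↥π.ker), h ∈ A → φ σ h ∈ A := by
    intro σ h hh
    show ν (φ σ h) = 1
    rw [νφ]
    have : ν h = 1 := hh
    rw [this, map_one]
  have hBφ : ∀ (σ : Γ) (h : ↥π.ker), h ∈ B → φ σ h ∈ B := by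
    rintro σ _ ⟨x, rfl⟩
    exact ⟨φ σ x, τφ σ x⟩
  haveI hnorm : (B.subgroupOf A).Normal := by
    constructor
    intro x hx g
    have : g * x * g⁻¹ = x := by
      rw [mul_comm g x, mul_assoc]
      simp
    rwa [this]
  -- the quotient group Q = A / B
  set Q := ↥A ⧸ B.subgroupOf A with hQ
  set resA : Γ → (↥A →* ↥A) := fun σ =>
    ((φ σ).toMonoidHom.domRestrict A).codRestrict A (fun x => hAφ σ x.1 x.2) with hresA
  have resA_coe : ∀ (σ : Γ) (a : ↥A), ((resA σ a : ↥A) : ↥π.ker) = φ σ (a : ↥π.ker) :=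
    fun σ a => rfl
  have resA_le : ∀ σ : Γ, B.subgroupOf A ≤ (B.subgroupOf A).comap (resA σ) := by
    intro σ x hx
    rw [Subgroup.mem_comap, Subgroup.mem_subgroupOf, resA_coe]
    exact hBφ σ _ (Subgroup.mem_subgroupOf.mp hx)
  set QL : Γ → (Q →* Q) := fun σ =>
    QuotientGroup.map (B.subgroupOf A) (B.subgroupOf A) (resA σ) (resA_le σ) with hQL
  have QL_mk : ∀ (σ : Γ) (a : ↥A), QL σ (QuotientGroup.mk a) = QuotientGroup.mk (resA σ a) :=
    fun σ a => rfl
  have QL_one : ∀ q : Q, QL 1 q = q := by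
    intro q
    refine QuotientGroup.induction_on q fun a => ?_
    rw [QL_mk]
    congr 1
    apply Subtype.ext
    rw [resA_coe, map_one]
    rfl
  have QL_mul : ∀ (σ δ : Γ) (q : Q), QL (σ * δ) q = QL σ (QL δ q) := by
    intro σ δ q
    refine QuotientGroup.induction_on q fun a => ?_
    rw [QL_mk, QL_mk, QL_mk]
    congr 1
    apply Subtype.ext
    rw [resA_coe, resA_coe, resA_coe, map_mul]
    rfl
  -- the cocycle
  have hker : ∀ k : G, k * g₀ * k⁻¹ * g₀⁻¹ ∈ π.ker := by
    intro k
    rw [MonoidHom.mem_ker, map_mul, map_mul, map_mul, map_inv, map_inv, hg₀γ]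
    rw [mul_comm (π k) γ]
    group
  set fk : G → ↥π.ker := fun k => ⟨k * g₀ * k⁻¹ * g₀⁻¹, hker k⟩ with hfk
  have fk_memA : ∀ k : G, fk k ∈ A := by
    intro k
    show ν (fk k) = 1
    show ((List.range n).map fun i => φ (γ ^ i) (fk k)).prod = 1
    rw [memA_iff]
    have h1 : ((fk k : ↥π.ker) : G) * g₀ = k * g₀ * k⁻¹ := by
      show k * g₀ * k⁻¹ * g₀⁻¹ * g₀ = k * g₀ * k⁻¹
      group
    rw [h1]
    have h2 : (k * g₀ * k⁻¹) ^ n = k * g₀ ^ n * k⁻¹ :=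
      ((MulAut.conj k).toMonoidHom.map_pow g₀ n).symm
    rw [h2, hg₀pow, mul_one, mul_inv_cancel]
  set fA : G → ↥A := fun k => ⟨fk k, fk_memA k⟩ with hfA
  set cQ : G → Q := fun k => QuotientGroup.mk (fA k) with hcQ
  have fA_cocycle : ∀ k l : G, fA (k * l) = resA (π k) (fA l) * fA k := by
    intro k l
    apply Subtype.ext
    apply Subtype.ext
    show (k * l) * g₀ * (k * l)⁻¹ * g₀⁻¹
      = ((((resA (π k) (fA l) : ↥A) : ↥π.ker) : G)) * (k * g₀ * k⁻¹ * g₀⁻¹)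
    rw [resA_coe]
    show _ = (((φ (π k) (fk l) : ↥π.ker) : G)) * (k * g₀ * k⁻¹ * g₀⁻¹)
    rw [hφ k (fk l)]
    show _ = k * (l * g₀ * l⁻¹ * g₀⁻¹) * k⁻¹ * (k * g₀ * k⁻¹ * g₀⁻¹)
    group
  have cQ_cocycle : ∀ k l : G, cQ (k * l) = QL (π k) (cQ l) * cQ k := by
    intro k l
    show QuotientGroup.mk (fA (k * l)) = _
    rw [fA_cocycle k l]
    rw [QuotientGroup.mk_mul]
    rw [QL_mk]
  -- the two actions
  set sl : G → Q → Q := fun k q => QL (π k) q with hsl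
  set sa : G → Q → Q := fun k q => QL (π k) q * cQ k with hsa
  have cQ_one : cQ 1 = 1 := by
    show QuotientGroup.mk (fA 1) = 1
    have : fA 1 = 1 := by
      apply Subtype.ext
      apply Subtype.ext
      show (1 : G) * g₀ * (1 : G)⁻¹ * g₀⁻¹ = 1
      group
    rw [this]
    rfl
  set Mlin : MulAction G Q :=
    { smul := sl
      one_smul := by
        intro q
        show QL (π 1) q = q
        rw [map_one]
        exact QL_one q
      mul_smul := by
        intro k l q
        show QL (π (k * l)) q = QL (π k) (QL (π l) q)
        rw [map_mul]
        exact QL_mul _ _ q } with hMlin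
  set Maff : MulAction G Q :=
    { smul := sa
      one_smul := by
        intro q
        show QL (π 1) q * cQ 1 = q
        rw [map_one, cQ_one, mul_one]
        exact QL_one q
      mul_smul := by
        intro k l q
        show QL (π (k * l)) q * cQ (k * l) = QL (π k) (QL (π l) q * cQ l) * cQ k
        rw [map_mul, QL_mul, cQ_cocycle, map_mul, mul_assoc]
      } with hMaff
  -- fixed point comparison
  have hfix : ∀ k : G, Nat.card {q : Q // sa k q = q} ≤ Nat.card {q : Q // sl k q = q} := by
    intro k
    rcases isEmpty_or_nonempty {q : Q // sa k q = q} with he | hne2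
    · rw [Nat.card_of_isEmpty]
      exact Nat.zero_le _
    obtain ⟨⟨q₀, hq₀⟩⟩ := hne2
    have hq₀' : QL (π k) q₀ = q₀ * (cQ k)⁻¹ := eq_mul_inv_of_mul_eq hq₀
    refine Nat.card_le_card_of_injective (fun q => ⟨q.1 * q₀⁻¹, ?_⟩) ?_
    · show QL (π k) (q.1 * q₀⁻¹) = q.1 * q₀⁻¹
      have hq' : QL (π k) q.1 = q.1 * (cQ k)⁻¹ := eq_mul_inv_of_mul_eq q.2
      rw [map_mul, map_inv, hq', hq₀', mul_inv, inv_inv, mul_comm q₀⁻¹ (cQ k),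
        ← mul_assoc, mul_assoc q.1, inv_mul_cancel, mul_one]
    · intro a b hab
      apply Subtype.ext
      have h := congrArg Subtype.val hab
      exact mul_right_cancel h
  -- converting between the subtypes
  set toA : {h : ↥π.ker // ((List.range n).map fun i => φ (γ ^ i) h).prod = 1} → ↥A :=
    fun s => ⟨s.1, MonoidHom.mem_ker.mpr s.2⟩ with htoA
  set toS2 : ↥A → {h : ↥π.ker // ((List.range n).map fun i => φ (γ ^ i) h).prod = 1} :=
    fun a => ⟨a.1, MonoidHom.mem_ker.mp a.2⟩ with htoS2
  -- the conjugation relation transported to S2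
  set Rc : {h : ↥π.ker // ((List.range n).map fun i => φ (γ ^ i) h).prod = 1} →
      {h : ↥π.ker // ((List.range n).map fun i => φ (γ ^ i) h).prod = 1} → Prop :=
    fun a b => ∃ c : G, c * ((a.1 : G) * g₀) * c⁻¹ = (b.1 : G) * g₀ with hRc
  -- the equivalence between the order-n fibre and S2
  have hψ'mem : ∀ g : {g : G // π g = γ ∧ orderOf g = n}, g.1 * g₀⁻¹ ∈ π.ker := by
    intro g
    rw [MonoidHom.mem_ker, map_mul, map_inv, g.2.1, hg₀γ, mul_inv_cancel]
  have hψ'A : ∀ g : {g : G // π g = γ ∧ orderOf g = n},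
      ((List.range n).map fun i => φ (γ ^ i) (⟨g.1 * g₀⁻¹, hψ'mem g⟩ : ↥π.ker)).prod = 1 := by
    intro g
    rw [memA_iff]
    show (g.1 * g₀⁻¹ * g₀) ^ n = 1
    rw [inv_mul_cancel_right]
    exact (ord_iff g.1 g.2.1).mp g.2.2
  set ψ' : {g : G // π g = γ ∧ orderOf g = n} →
      {h : ↥π.ker // ((List.range n).map fun i => φ (γ ^ i) h).prod = 1} :=
    fun g => ⟨⟨g.1 * g₀⁻¹, hψ'mem g⟩, hψ'A g⟩ with hψ'
  have hχmem : ∀ h : {h : ↥π.ker // ((List.range n).map fun i => φ (γ ^ i) h).prod = 1},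
      π ((h.1 : G) * g₀) = γ ∧ orderOf ((h.1 : G) * g₀) = n := by
    intro h
    have hπh : π (h.1 : G) = 1 := h.1.2
    have hπ1 : π ((h.1 : G) * g₀) = γ := by rw [map_mul, hπh, one_mul, hg₀γ]
    exact ⟨hπ1, (ord_iff _ hπ1).mpr ((memA_iff h.1).mp h.2)⟩
  set χ : {h : ↥π.ker // ((List.range n).map fun i => φ (γ ^ i) h).prod = 1} →
      {g : G // π g = γ ∧ orderOf g = n} :=
    fun h => ⟨(h.1 : G) * g₀, hχmem h⟩ with hχ
  set e : {g : G // π g = γ ∧ orderOf g = n} ≃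
      {h : ↥π.ker // ((List.range n).map fun i => φ (γ ^ i) h).prod = 1} :=
    ⟨ψ', χ, fun g => Subtype.ext (by show g.1 * g₀⁻¹ * g₀ = g.1; group),
      fun h => Subtype.ext (Subtype.ext (by show (h.1 : G) * g₀ * g₀⁻¹ = h.1; group))⟩ with he
  have hiff : ∀ a b : {g : G // π g = γ ∧ orderOf g = n},
      IsConj a.1 b.1 ↔ Rc (e a) (e b) := by
    intro a b
    rw [isConj_iff]
    simp only [he, hRc, hψ', Equiv.coe_fn_mk]
    show _ ↔ ∃ c : G, c * (a.1 * g₀⁻¹ * g₀) * c⁻¹ = b.1 * g₀⁻¹ * g₀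
    rw [inv_mul_cancel_right, inv_mul_cancel_right]
  have ecard : Nat.card (Quot (fun a b : {g : G // π g = γ ∧ orderOf g = n} => IsConj a.1 b.1))
      = Nat.card (Quot Rc) := Nat.card_congr (Quot.congr e hiff)
  -- surjection from affine orbits onto Rc-classes
  have wd1 : ∀ a b : ↥A, (QuotientGroup.leftRel (B.subgroupOf A)).r a b →
      Quot.mk Rc (toS2 a) = Quot.mk Rc (toS2 b) := by
    intro a b hab
    rw [QuotientGroup.leftRel_apply] at hab
    obtain ⟨x, hx⟩ := Subgroup.mem_subgroupOf.mp hab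
    apply Quot.sound
    rw [hRc]
    refine ⟨((x : ↥π.ker) : G), ?_⟩
    have hb : ((b : ↥π.ker) : G) = ((a : ↥π.ker) : G) * ((τ x : ↥π.ker) : G) := by
      have : (b : ↥π.ker) = (a : ↥π.ker) * (τ x) := by
        rw [hx]
        push_cast
        group
      rw [this]
      push_cast
      rfl
    have hcm : ((x : ↥π.ker) : G) * ((a : ↥π.ker) : G)
        = ((a : ↥π.ker) : G) * ((x : ↥π.ker) : G) := by
      exact_mod_cast congrArg Subtype.val (mul_comm (x : ↥π.ker) (a : ↥π.ker))
    have hτx : ((τ x : ↥π.ker) : G) = (x : G) * (g₀ * (x : G)⁻¹ * g₀⁻¹) := by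
      show ((x * (φ γ x)⁻¹ : ↥π.ker) : G) = _
      push_cast
      rw [← hg₀γ]
      rw [show ((φ (π g₀) x : ↥π.ker) : G)⁻¹ = (g₀ * (x : G) * g₀⁻¹)⁻¹ from by rw [hφ g₀ x]]
      group
    show (x : G) * ((toS2 a).1 * g₀) * (x : G)⁻¹ = ((toS2 b).1 : G) * g₀
    show (x : G) * (((a : ↥π.ker) : G) * g₀) * (x : G)⁻¹ = ((b : ↥π.ker) : G) * g₀
    rw [hb, hτx, ← mul_assoc, ← mul_assoc, hcm]
    group
  have F1wd : ∀ (k : G) (a : ↥A),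
      Quot.mk Rc (toS2 a) = Quot.mk Rc (toS2 (resA (π k) a * fA k)) := by
    intro k a
    apply Quot.sound
    rw [hRc]
    refine ⟨k, ?_⟩
    show k * (((a : ↥π.ker) : G) * g₀) * k⁻¹ = ((((resA (π k) a * fA k : ↥A) : ↥π.ker)) : G) * g₀
    have hco : ((((resA (π k) a * fA k : ↥A) : ↥π.ker)) : G)
        = (k * ((a : ↥π.ker) : G) * k⁻¹) * (k * g₀ * k⁻¹ * g₀⁻¹) := by
      push_cast
      rw [resA_coe, hφ k]
    rw [hco]
    group
  set F1 : Q → Quot Rc := Quotient.lift (fun a : ↥A => Quot.mk Rc (toS2 a)) wd1 with hF1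
  have hF1mk : ∀ a : ↥A, F1 (QuotientGroup.mk a) = Quot.mk Rc (toS2 a) := fun a => rfl
  have wd2 : ∀ q q' : Q, (∃ k : G, sa k q = q') → F1 q = F1 q' := by
    rintro q _ ⟨k, rfl⟩
    refine QuotientGroup.induction_on q fun a => ?_
    have hsak : sa k (QuotientGroup.mk a) = QuotientGroup.mk (resA (π k) a * fA k) := by
      show QL (π k) (QuotientGroup.mk a) * cQ k = _
      rw [QL_mk]
      rw [hcQ]
      rw [← QuotientGroup.mk_mul]
    rw [hsak, hF1mk, hF1mk]
    exact F1wd k a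
  have ineq1 : Nat.card (Quot Rc) ≤ Nat.card (Quot fun q q' : Q => ∃ k : G, sa k q = q') := by
    refine Nat.card_le_card_of_surjective (Quot.lift F1 wd2) ?_
    intro qc
    obtain ⟨s, rfl⟩ := Quot.exists_rep qc
    refine ⟨Quot.mk _ (QuotientGroup.mk (toA s)), ?_⟩
    show F1 (QuotientGroup.mk (toA s)) = Quot.mk Rc s
    rw [hF1mk]
  have ineq2 : Nat.card (Quot fun q q' : Q => ∃ k : G, sa k q = q')
      ≤ Nat.card (Quot fun q q' : Q => ∃ k : G, sl k q = q') :=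
    stmt13_orbit_le Maff Mlin hfix
  -- surjection from the R-classes onto the linear orbits
  have wd3 : ∀ a b : {h : ↥π.ker // ((List.range n).map fun i => φ (γ ^ i) h).prod = 1},
      (∃ σ : Γ, ∃ x : ↥π.ker, b.1 = φ σ a.1 * (x * (φ γ x)⁻¹)) →
      Quot.mk (fun q q' : Q => ∃ k : G, sl k q = q') (QuotientGroup.mk (toA a))
        = Quot.mk (fun q q' : Q => ∃ k : G, sl k q = q') (QuotientGroup.mk (toA b)) := by
    rintro a b ⟨σ, x, hbx⟩
    obtain ⟨k, hk⟩ := hπ σ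
    apply Quot.sound
    refine ⟨k, ?_⟩
    show QL (π k) (QuotientGroup.mk (toA a)) = QuotientGroup.mk (toA b)
    rw [QL_mk, hk]
    rw [QuotientGroup.eq]
    rw [Subgroup.mem_subgroupOf]
    have hco : (((resA σ (toA a))⁻¹ * toA b : ↥A) : ↥π.ker) = (φ σ a.1)⁻¹ * b.1 := by
      push_cast
      rw [resA_coe]
    rw [hco, hbx, inv_mul_cancel_left]
    exact ⟨x, rfl⟩
  have ineq3 : Nat.card (Quot fun q q' : Q => ∃ k : G, sl k q = q')
      ≤ Nat.card (Quot (fun a b :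
        {h : ↥π.ker // ((List.range n).map fun i => φ (γ ^ i) h).prod = 1} =>
          ∃ σ : Γ, ∃ x : ↥π.ker, b.1 = φ σ a.1 * (x * (φ γ x)⁻¹))) := by
    refine Nat.card_le_card_of_surjective
      (Quot.lift (fun s => Quot.mk (fun q q' : Q => ∃ k : G, sl k q = q')
        (QuotientGroup.mk (toA s))) wd3) ?_
    intro q
    obtain ⟨q', rfl⟩ := Quot.exists_rep q
    obtain ⟨a, rfl⟩ := Quotient.exists_rep q'
    refine ⟨Quot.mk _ (toS2 a), ?_⟩
    show Quot.mk _ (QuotientGroup.mk (toA (toS2 a))) = _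
    congr 1
  calc Nat.card (Quot (fun a b : {g : G // π g = γ ∧ orderOf g = n} => IsConj a.1 b.1))
      = Nat.card (Quot Rc) := ecard
    _ ≤ Nat.card (Quot fun q q' : Q => ∃ k : G, sa k q = q') := ineq1
    _ ≤ Nat.card (Quot fun q q' : Q => ∃ k : G, sl k q = q') := ineq2
    _ ≤ _ := ineq3
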